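/- Let x₁, …, xₙ ∈ ℝ^d with ‖xᵢ‖₂ ≤ 1 for all i, let y₁, …, yₙ ∈ [0, B] for some B ≥ 0, and let λ > 0. Let Λ = Σᵢ₌₁ⁿ xᵢxᵢᵀ + λI and w = Λ⁻¹ Σᵢ₌₁ⁿ xᵢyᵢ be the ridge-regression coefficient. Then ‖w‖₂ ≤ B√(dn/λ). -/

import Mathlib

open Matrix Finset

variable {d : ℕ}

lemma psd_vmv (v : Fin d → ℝ) : (vecMulVec v v).PosSemidef := by
  refine PosSemidef.of_dotProduct_mulVec_nonneg ?_ ?_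
  · ext i j
    simp [conjTranspose_apply, vecMulVec_apply, mul_comm]
  · intro z
    have h1 : vecMulVec v v *ᵥ z = fun i => v i * (v ⬝ᵥ z) := by
      ext i; simp [mulVec, vecMulVec_apply, dotProduct, Finset.mul_sum, mul_assoc]
    rw [h1]
    have h2 : star z ⬝ᵥ (fun i => v i * (v ⬝ᵥ z)) = (z ⬝ᵥ v) * (v ⬝ᵥ z) := by
      simp only [dotProduct, star_trivial]
      rw [Finset.sum_mul]
      exact Finset.sum_congr rfl fun i _ => by ring
    rw [h2, dotProduct_comm]
    exact mul_self_nonneg _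

lemma tr_mul_vmv (M : Matrix (Fin d) (Fin d) ℝ) (v : Fin d → ℝ) :
    (M * vecMulVec v v).trace = v ⬝ᵥ (M *ᵥ v) := by
  simp only [trace, diag_apply, Matrix.mul_apply, vecMulVec_apply, dotProduct, mulVec,
    Finset.mul_sum]
  exact Finset.sum_congr rfl fun j _ => Finset.sum_congr rfl fun k _ => by ring

lemma diag_pos' {M : Matrix (Fin d) (Fin d) ℝ} (hM : M.PosDef) (j : Fin d) : 0 < M j j := by
  exact hM.diag_pos

open scoped MatrixOrder in
lemma sqrt_ex' {M : Matrix (Fin d) (Fin d) ℝ} (hM : M.PosSemidef) :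
    ∃ S : Matrix (Fin d) (Fin d) ℝ, S * S = M ∧ Sᴴ = S :=
  ⟨CFC.sqrt M, CFC.sqrt_mul_sqrt_self M hM.nonneg,
    (Matrix.nonneg_iff_posSemidef.mp (CFC.sqrt_nonneg M)).1⟩

theorem stmt_5 (d n : ℕ) (x : Fin n → Fin d → ℝ)
    (hx : ∀ i, Real.sqrt (∑ j, x i j ^ 2) ≤ 1)
    (B : ℝ) (hB : 0 ≤ B) (y : Fin n → ℝ) (hy : ∀ i, y i ∈ Set.Icc 0 B)
    (lam : ℝ) (hlam : 0 < lam) :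
    Real.sqrt (∑ j, ((((∑ i, vecMulVec (x i) (x i)) + lam • (1 : Matrix (Fin d) (Fin d) ℝ))⁻¹ *ᵥ
        (∑ i, y i • x i)) j) ^ 2) ≤ B * Real.sqrt (d * n / lam) := by
  classical
  set A : Matrix (Fin d) (Fin d) ℝ := ∑ i, vecMulVec (x i) (x i) with hAdef
  set Λ : Matrix (Fin d) (Fin d) ℝ := A + lam • 1 with hLdef
  set b : Fin d → ℝ := ∑ i, y i • x i with hbdef
  set w : Fin d → ℝ := Λ⁻¹ *ᵥ b with hwdef
  have hApsd : A.PosSemidef :=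
    Finset.sum_induction _ _ (fun a b ha hb => ha.add hb) Matrix.PosSemidef.zero
      (fun i _ => psd_vmv (x i))
  have hlam1 : (lam • (1 : Matrix (Fin d) (Fin d) ℝ)).PosDef := by
    rw [smul_one_eq_diagonal]
    exact Matrix.posDef_diagonal_iff.mpr fun _ => hlam
  have hΛ : Λ.PosDef := Matrix.PosDef.posSemidef_add hApsd hlam1
  have hΛi : Λ⁻¹.PosDef := hΛ.inv
  have hdet : IsUnit Λ.det := isUnit_iff_ne_zero.mpr hΛ.det_pos.ne'
  have hmul : Λ * Λ⁻¹ = 1 := mul_nonsing_inv _ hdet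
  have hmul' : Λ⁻¹ * Λ = 1 := nonsing_inv_mul _ hdet
  have hΛw : Λ *ᵥ w = b := by rw [hwdef, mulVec_mulVec, hmul, one_mulVec]
  obtain ⟨S, hSsq', hSH⟩ := sqrt_ex' hΛi.posSemidef
  have hSsq : S * S = Λ⁻¹ := hSsq'
  have hSsymm : Sᵀ = S := by
    rw [← conjTranspose_eq_transpose_of_trivial]
    exact hSH
  have hkey : ∀ u v : Fin d → ℝ, u ⬝ᵥ (Λ⁻¹ *ᵥ v) = (S *ᵥ u) ⬝ᵥ (S *ᵥ v) := by
    intro u v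
    rw [← hSsq, ← mulVec_mulVec, dotProduct_mulVec]
    congr 1
    rw [← vecMul_transpose, hSsymm]
  -- Step 1 : lam * (w ⬝ᵥ w) ≤ b ⬝ᵥ w
  have step1 : lam * (w ⬝ᵥ w) ≤ b ⬝ᵥ w := by
    have h1 : b ⬝ᵥ w = (A *ᵥ w) ⬝ᵥ w + lam * (w ⬝ᵥ w) := by
      rw [← hΛw, hLdef, add_mulVec, add_dotProduct, smul_mulVec, one_mulVec,
        smul_dotProduct]
      rfl
    have h2 : 0 ≤ (A *ᵥ w) ⬝ᵥ w := by
      have := hApsd.dotProduct_mulVec_nonneg w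
      rwa [star_trivial, dotProduct_comm] at this
    linarith
  -- traces
  set q : Fin n → ℝ := fun i => x i ⬝ᵥ (Λ⁻¹ *ᵥ x i) with hqdef
  have htr : ∑ i, q i = (Λ⁻¹ * A).trace := by
    rw [hAdef, Matrix.mul_sum, trace_sum]
    exact Finset.sum_congr rfl fun i _ => (tr_mul_vmv _ _).symm
  have hqd : ∑ i, q i ≤ (d : ℝ) := by
    have hAeq : A = Λ - lam • 1 := by rw [hLdef]; abel
    have h3 : (Λ⁻¹ * A).trace = (d : ℝ) - lam * Λ⁻¹.trace := by
      rw [hAeq, Matrix.mul_sub, trace_sub, hmul', trace_one, Matrix.mul_smul, Matrix.mul_one,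
        trace_smul]
      simp [Fintype.card_fin]
    have h4 : 0 ≤ Λ⁻¹.trace := by
      rw [Matrix.trace]
      exact Finset.sum_nonneg fun j _ => (diag_pos' hΛi j).le
    rw [htr, h3]
    nlinarith
  -- Euclidean space
  set L := (WithLp.linearEquiv 2 ℝ (Fin d → ℝ)).symm with hLdef'
  have hnormsq : ∀ v : Fin d → ℝ, ‖L v‖ ^ 2 = v ⬝ᵥ v := by
    intro v
    rw [EuclideanSpace.norm_eq, Real.sq_sqrt (by positivity)]
    exact Finset.sum_congr rfl fun j _ => by
      simp [Real.norm_eq_abs, sq_abs, dotProduct, sq, hLdef', WithLp.linearEquiv]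
  have hSb : S *ᵥ b = ∑ i, y i • (S *ᵥ x i) := by
    rw [hbdef, ← mulVecLin_apply, map_sum]
    simp only [mulVecLin_apply, mulVec_smul]
  have hbound : ‖L (S *ᵥ b)‖ ≤ ∑ i, y i * ‖L (S *ᵥ x i)‖ := by
    rw [hSb, map_sum]
    refine (norm_sum_le _ _).trans (Finset.sum_le_sum fun i _ => ?_)
    rw [_root_.map_smul, norm_smul, Real.norm_eq_abs, abs_of_nonneg (hy i).1]
  have hqn : ∀ i, ‖L (S *ᵥ x i)‖ ^ 2 = q i := fun i => by rw [hnormsq, ← hkey]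
  have hyB : ∑ i, y i ^ 2 ≤ (n : ℝ) * B ^ 2 := by
    calc ∑ i, y i ^ 2 ≤ ∑ _i : Fin n, B ^ 2 :=
          Finset.sum_le_sum fun i _ => by nlinarith [(hy i).1, (hy i).2]
      _ = (n : ℝ) * B ^ 2 := by simp [Finset.sum_const, nsmul_eq_mul]
  have step2 : b ⬝ᵥ w ≤ B ^ 2 * ((n : ℝ) * d) := by
    have e1 : b ⬝ᵥ w = ‖L (S *ᵥ b)‖ ^ 2 := by rw [hwdef, hkey, hnormsq]
    calc b ⬝ᵥ w = ‖L (S *ᵥ b)‖ ^ 2 := e1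
      _ ≤ (∑ i, y i * ‖L (S *ᵥ x i)‖) ^ 2 := by
          apply pow_le_pow_left₀ (norm_nonneg _) hbound
      _ ≤ (∑ i, y i ^ 2) * (∑ i, ‖L (S *ᵥ x i)‖ ^ 2) :=
          Finset.sum_mul_sq_le_sq_mul_sq _ _ _
      _ = (∑ i, y i ^ 2) * (∑ i, q i) := by
          rw [Finset.sum_congr rfl fun i _ => hqn i]
      _ ≤ ((n : ℝ) * B ^ 2) * d := by
          apply mul_le_mul hyB hqd
          · exact Finset.sum_nonneg fun i _ => (hqn i) ▸ sq_nonneg _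
          · positivity
      _ = B ^ 2 * ((n : ℝ) * d) := by ring
  have hfin : ∑ j, w j ^ 2 ≤ B ^ 2 * ((d : ℝ) * n / lam) := by
    have hww : ∑ j, w j ^ 2 = w ⬝ᵥ w := by simp [dotProduct, sq]
    rw [hww, mul_div_assoc' , le_div_iff₀ hlam]
    nlinarith [step1, step2]
  calc Real.sqrt (∑ j, w j ^ 2) ≤ Real.sqrt (B ^ 2 * ((d : ℝ) * n / lam)) :=
        Real.sqrt_le_sqrt hfin
    _ = B * Real.sqrt ((d : ℝ) * n / lam) := by
        rw [Real.sqrt_mul (sq_nonneg B), Real.sqrt_sq hB]
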